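/- arXiv:2112.05463 — 6 statements merged into one kernel-verified Lean document; each statement's English description precedes it below -/
import Mathlib

section
/- For every η with 0 < η < 1, the map F_η : 𝕋² → 𝕋² is a bijection which preserves the Haar probability measure μ on 𝕋² (i.e. μ(F_η⁻¹(A)) = μ(A) for every measurable A ⊆ 𝕋²). -/
open MeasureTheory Filter Topology

noncomputable section

/-- The torus `𝕋² = ℝ²/ℤ²`, realized as `AddCircle 1 × AddCircle 1`. -/
abbrev Torus := AddCircle (1:ℝ) × AddCircle (1:ℝ)

/-- The Haar probability measure `μ` on `𝕋²`. -/
noncomputable def μ : Measure Torus := volume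

/-- The representative in `[0,1)` of a point of the circle `ℝ/ℤ`. -/
noncomputable def rep (z : AddCircle (1:ℝ)) : ℝ := (AddCircle.equivIco 1 0 z : ℝ)

/-- The non-monotonic shear `F_η`, defined on representatives `(x,y) ∈ [0,1)²` by
`F_η(x,y) = (x + y/(1-η) mod 1, y)` if `y ≤ 1-η`, and `(x + (1-y)/η mod 1, y)` if `y ≥ 1-η`. -/
noncomputable def Fmap (η : ℝ) (z : Torus) : Torus :=
  (z.1 + (↑(if rep z.2 ≤ 1 - η then rep z.2 / (1 - η) else (1 - rep z.2) / η) :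
      AddCircle (1:ℝ)), z.2)

/-- The non-monotonic shear `G_ξ`, defined on representatives `(x,y) ∈ [0,1)²` by
`G_ξ(x,y) = (x, y + x/(1-ξ) mod 1)` if `x ≤ 1-ξ`, and `(x, y + (1-x)/ξ mod 1)` if `x ≥ 1-ξ`. -/
noncomputable def Gmap (ξ : ℝ) (z : Torus) : Torus :=
  (z.1, z.2 + (↑(if rep z.1 ≤ 1 - ξ then rep z.1 / (1 - ξ) else (1 - rep z.1) / ξ) :
      AddCircle (1:ℝ)))

/-- The composition `H_{(ξ,η)} = G_ξ ∘ F_η`. -/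
noncomputable def Hmap (ξ η : ℝ) : Torus → Torus := Gmap ξ ∘ Fmap η

/-- For every `0 < η < 1`, the shear `F_η : 𝕋² → 𝕋²` is a bijection preserving
the Haar probability measure `μ` on `𝕋²`. -/
theorem Fmap_bijective_measurePreserving (η : ℝ) (hη0 : 0 < η) (hη1 : η < 1) :
    Function.Bijective (Fmap η) ∧
      ∀ A : Set Torus, MeasurableSet A → μ (Fmap η ⁻¹' A) = μ A := by
  set c : AddCircle (1:ℝ) → AddCircle (1:ℝ) := fun y =>
    (↑(if rep y ≤ 1 - η then rep y / (1 - η) else (1 - rep y) / η) : AddCircle (1:ℝ)) with hc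
  have hF : Fmap η = fun z : Torus => (z.1 + c z.2, z.2) := rfl
  have hrep : Measurable rep :=
    measurable_subtype_coe.comp (AddCircle.measurableEquivIco (1:ℝ) 0).measurable
  have hcm : Measurable c := by
    apply AddCircle.measurable_mk'.comp
    exact Measurable.ite (measurableSet_le hrep measurable_const)
      (hrep.div_const (1 - η)) ((measurable_const.sub hrep).div_const η)
  constructor
  · constructor
    · intro a b hab
      have hab' : (a.1 + c a.2, a.2) = (b.1 + c b.2, b.2) := hab
      rw [Prod.mk.injEq] at hab'
      obtain ⟨h1, h2⟩ := hab'
      rw [h2] at h1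
      exact Prod.ext (add_right_cancel h1) h2
    · intro z
      exact ⟨(z.1 - c z.2, z.2), by simp [hF]⟩
  · intro A hA
    have hswap : MeasurePreserving (Prod.swap : Torus → Torus)
        ((volume : Measure (AddCircle (1:ℝ))).prod volume)
        ((volume : Measure (AddCircle (1:ℝ))).prod volume) :=
      Measure.measurePreserving_swap
    have hK : MeasurePreserving
        (fun p : AddCircle (1:ℝ) × AddCircle (1:ℝ) => (p.1, p.2 + c p.1))
        ((volume : Measure (AddCircle (1:ℝ))).prod volume)
        ((volume : Measure (AddCircle (1:ℝ))).prod volume) := by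
      refine (MeasurePreserving.id volume).skew_product
        (g := fun y x => x + c y) (measurable_snd.add (hcm.comp measurable_fst))
        (ae_of_all _ fun y => ?_)
      exact (measurePreserving_add_right volume (c y)).map_eq
    have hFmp : MeasurePreserving (Fmap η)
        ((volume : Measure (AddCircle (1:ℝ))).prod volume)
        ((volume : Measure (AddCircle (1:ℝ))).prod volume) := by
      have : Fmap η = Prod.swap ∘ (fun p : AddCircle (1:ℝ) × AddCircle (1:ℝ) =>
          (p.1, p.2 + c p.1)) ∘ Prod.swap := rfl
      rw [this]
      exact (hswap.comp hK).comp hswap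
    have hvol : (μ : Measure Torus) =
        ((volume : Measure (AddCircle (1:ℝ))).prod volume) := by
      rw [μ, Measure.volume_eq_prod]
    rw [hvol]
    exact hFmp.measure_preimage hA.nullMeasurableSet
end
end

section
/- For all ξ, η with 0 < ξ, η < 1, the composition H_{(ξ,η)} = G_ξ ∘ F_η is a homeomorphism of 𝕋² which preserves the Haar probability measure μ. -/
open MeasureTheory Filter Topology

noncomputable section

/-! ### Auxiliary material -/

/-- The real-valued shear amount. -/
noncomputable def shamt (η : ℝ) (t : ℝ) : ℝ :=
  if t ≤ 1 - η then t / (1 - η) else (1 - t) / η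

/-- The shear amount as a map on the circle. -/
noncomputable def φc (η : ℝ) : AddCircle (1:ℝ) → AddCircle (1:ℝ) :=
  AddCircle.liftIco 1 0 (fun t => ((shamt η t : ℝ) : AddCircle (1:ℝ)))

lemma φc_apply (η : ℝ) (z : AddCircle (1:ℝ)) :
    φc η z = ((shamt η (rep z) : ℝ) : AddCircle (1:ℝ)) := rfl

lemma shamt_continuous {η : ℝ} (hη0 : 0 < η) (hη1 : η < 1) : Continuous (shamt η) := by
  have h1 : (1 - η) ≠ 0 := by linarith
  have h2 : η ≠ 0 := ne_of_gt hη0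
  apply Continuous.if_le (continuous_id.div_const _)
    ((continuous_const.sub continuous_id).div_const _) continuous_id continuous_const
  intro t ht
  simp only [id_eq] at ht
  subst ht
  field_simp
  simp only [id_eq, Pi.sub_apply]; ring

lemma φc_continuous {η : ℝ} (hη0 : 0 < η) (hη1 : η < 1) : Continuous (φc η) := by
  apply AddCircle.liftIco_zero_continuous
  · have h0 : shamt η 0 = 0 := by
      simp only [shamt, if_pos (by linarith : (0:ℝ) ≤ 1 - η), zero_div]
    have h1 : shamt η 1 = 0 := by
      simp only [shamt, if_neg (by intro h; linarith : ¬ (1:ℝ) ≤ 1 - η), sub_self, zero_div]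
    rw [h0, h1]
  · exact ((AddCircle.continuous_mk' 1).comp (shamt_continuous hη0 hη1)).continuousOn

lemma Fmap_eq (η : ℝ) : Fmap η = fun z : Torus => (z.1 + φc η z.2, z.2) := rfl

lemma Gmap_eq (ξ : ℝ) : Gmap ξ = fun z : Torus => (z.1, z.2 + φc ξ z.1) := rfl

/-- skew translation in first coordinate preserves volume -/
lemma mp_fst (φ : AddCircle (1:ℝ) → AddCircle (1:ℝ)) (hφ : Measurable φ)
    (A : Set Torus) (hA : MeasurableSet A) :
    volume ((fun z : Torus => (z.1 + φ z.2, z.2)) ⁻¹' A) = volume A := by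
  have hm : Measurable (fun z : Torus => (z.1 + φ z.2, z.2)) :=
    (measurable_fst.add (hφ.comp measurable_snd)).prodMk measurable_snd
  rw [show (volume : Measure Torus)
      = (volume : Measure (AddCircle (1:ℝ))).prod volume from Measure.volume_eq_prod _ _,
    Measure.prod_apply_symm (hm hA), Measure.prod_apply_symm hA]
  refine lintegral_congr fun y => ?_
  have : ((fun x => (x, y)) ⁻¹' ((fun z : Torus => (z.1 + φ z.2, z.2)) ⁻¹' A))
      = (fun x => x + φ y) ⁻¹' ((fun x => (x, y)) ⁻¹' A) := rfl
  rw [this, measure_preimage_add_right]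

/-- skew translation in second coordinate preserves volume -/
lemma mp_snd (φ : AddCircle (1:ℝ) → AddCircle (1:ℝ)) (hφ : Measurable φ)
    (A : Set Torus) (hA : MeasurableSet A) :
    volume ((fun z : Torus => (z.1, z.2 + φ z.1)) ⁻¹' A) = volume A := by
  have hm : Measurable (fun z : Torus => (z.1, z.2 + φ z.1)) :=
    measurable_fst.prodMk (measurable_snd.add (hφ.comp measurable_fst))
  rw [show (volume : Measure Torus)
      = (volume : Measure (AddCircle (1:ℝ))).prod volume from Measure.volume_eq_prod _ _,
    Measure.prod_apply (hm hA), Measure.prod_apply hA]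
  refine lintegral_congr fun x => ?_
  have : (Prod.mk x ⁻¹' ((fun z : Torus => (z.1, z.2 + φ z.1)) ⁻¹' A))
      = (fun y => y + φ x) ⁻¹' (Prod.mk x ⁻¹' A) := rfl
  rw [this, measure_preimage_add_right]

/-- `F_η` as a homeomorphism. -/
noncomputable def Fhomeo (η : ℝ) (hη0 : 0 < η) (hη1 : η < 1) : Torus ≃ₜ Torus where
  toFun := Fmap η
  invFun := fun z => (z.1 - φc η z.2, z.2)
  left_inv := fun z => by simp [Fmap_eq]
  right_inv := fun z => by simp [Fmap_eq]
  continuous_toFun := by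
    show Continuous (Fmap η)
    rw [Fmap_eq]
    exact (continuous_fst.add ((φc_continuous hη0 hη1).comp continuous_snd)).prodMk
      continuous_snd
  continuous_invFun :=
    (continuous_fst.sub ((φc_continuous hη0 hη1).comp continuous_snd)).prodMk continuous_snd

/-- `G_ξ` as a homeomorphism. -/
noncomputable def Ghomeo (ξ : ℝ) (hξ0 : 0 < ξ) (hξ1 : ξ < 1) : Torus ≃ₜ Torus where
  toFun := Gmap ξ
  invFun := fun z => (z.1, z.2 - φc ξ z.1)
  left_inv := fun z => by simp [Gmap_eq]
  right_inv := fun z => by simp [Gmap_eq]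
  continuous_toFun := by
    show Continuous (Gmap ξ)
    rw [Gmap_eq]
    exact continuous_fst.prodMk
      (continuous_snd.add ((φc_continuous hξ0 hξ1).comp continuous_fst))
  continuous_invFun :=
    continuous_fst.prodMk (continuous_snd.sub ((φc_continuous hξ0 hξ1).comp continuous_fst))

/-- For all `0 < ξ, η < 1`, the composition `H_{(ξ,η)} = G_ξ ∘ F_η` is a homeomorphism
of `𝕋²` which preserves the Haar probability measure `μ`. -/
theorem Hmap_homeomorph_measurePreserving (ξ η : ℝ) (hξ0 : 0 < ξ) (hξ1 : ξ < 1)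
    (hη0 : 0 < η) (hη1 : η < 1) :
    (∃ h : Torus ≃ₜ Torus, ⇑h = Hmap ξ η) ∧
      ∀ A : Set Torus, MeasurableSet A → μ (Hmap ξ η ⁻¹' A) = μ A := by
  constructor
  · exact ⟨(Fhomeo η hη0 hη1).trans (Ghomeo ξ hξ0 hξ1), rfl⟩
  · intro A hA
    have hφη : Measurable (φc η) := (φc_continuous hη0 hη1).measurable
    have hφξ : Measurable (φc ξ) := (φc_continuous hξ0 hξ1).measurable
    have hG : Measurable (Gmap ξ) := by
      rw [Gmap_eq]
      exact measurable_fst.prodMk (measurable_snd.add (hφξ.comp measurable_fst))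
    have hGA : MeasurableSet (Gmap ξ ⁻¹' A) := hG hA
    show volume (Hmap ξ η ⁻¹' A) = volume A
    have : Hmap ξ η ⁻¹' A = Fmap η ⁻¹' (Gmap ξ ⁻¹' A) := rfl
    rw [this, Fmap_eq, mp_fst (φc η) hφη _ hGA, Gmap_eq, mp_snd (φc ξ) hφξ A hA]

end
end

section
/- For all ξ, η with 0 < ξ, η < 1, the matrix M₁ maps the closed positive cone C⁺ = {(a,b) ∈ ℝ² : a ≥ 0 and b ≥ 0} into itself, and for every v ∈ C⁺ one has ‖M₁ v‖₁ ≥ 2‖v‖₁, where ‖(a,b)‖₁ = |a| + |b|. -/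
open Matrix

noncomputable section

/-- `M₁ = [[1, 1/(1-η)], [1/(1-ξ), 1 + 1/((1-ξ)(1-η))]]`. -/
noncomputable def M1 (ξ η : ℝ) : Matrix (Fin 2) (Fin 2) ℝ :=
  !![1, 1/(1-η); 1/(1-ξ), 1 + 1/((1-ξ)*(1-η))]

/-- `M₂ = [[1, 1/(1-η)], [-1/ξ, 1 - 1/(ξ(1-η))]]`. -/
noncomputable def M2 (ξ η : ℝ) : Matrix (Fin 2) (Fin 2) ℝ :=
  !![1, 1/(1-η); -(1/ξ), 1 - 1/(ξ*(1-η))]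

/-- `M₃ = [[1, -1/η], [1/(1-ξ), 1 - 1/(η(1-ξ))]]`. -/
noncomputable def M3 (ξ η : ℝ) : Matrix (Fin 2) (Fin 2) ℝ :=
  !![1, -(1/η); 1/(1-ξ), 1 - 1/(η*(1-ξ))]

/-- `M₄ = [[1, -1/η], [-1/ξ, 1 + 1/(ξη)]]`. -/
noncomputable def M4 (ξ η : ℝ) : Matrix (Fin 2) (Fin 2) ℝ :=
  !![1, -(1/η); -(1/ξ), 1 + 1/(ξ*η)]

/-- For all `0 < ξ, η < 1`, `M₁` maps the closed positive cone
`C⁺ = {(a,b) : a ≥ 0, b ≥ 0}` into itself, and expands the `ℓ¹`-norm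
`‖(a,b)‖₁ = |a| + |b|` by a factor at least 2 on this cone. -/
theorem M1_cone_invariant_expanding (ξ η : ℝ) (hξ0 : 0 < ξ) (hξ1 : ξ < 1)
    (hη0 : 0 < η) (hη1 : η < 1) :
    ∀ v : Fin 2 → ℝ, 0 ≤ v 0 → 0 ≤ v 1 →
      (0 ≤ (M1 ξ η).mulVec v 0 ∧ 0 ≤ (M1 ξ η).mulVec v 1) ∧
      2 * (|v 0| + |v 1|) ≤ |(M1 ξ η).mulVec v 0| + |(M1 ξ η).mulVec v 1| := by

  intro v h0 h1
  have hξ : (0:ℝ) < 1 - ξ := by linarith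
  have hη : (0:ℝ) < 1 - η := by linarith
  have hξi : (1:ℝ) ≤ 1/(1-ξ) := by
    rw [le_div_iff₀ hξ]; linarith
  have hηi : (1:ℝ) ≤ 1/(1-η) := by
    rw [le_div_iff₀ hη]; linarith
  have hprod : (1:ℝ) ≤ 1/((1-ξ)*(1-η)) := by
    rw [le_div_iff₀ (mul_pos hξ hη)]; nlinarith
  have hw0 : (M1 ξ η).mulVec v 0 = v 0 + (1/(1-η)) * v 1 := by
    simp [M1, Matrix.mulVec, dotProduct, Fin.sum_univ_two]
  have hw1 : (M1 ξ η).mulVec v 1 = (1/(1-ξ)) * v 0 + (1 + 1/((1-ξ)*(1-η))) * v 1 := by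
    simp [M1, Matrix.mulVec, dotProduct, Fin.sum_univ_two]
  have h0' : 0 ≤ (M1 ξ η).mulVec v 0 := by
    rw [hw0]; positivity
  have h1' : 0 ≤ (M1 ξ η).mulVec v 1 := by
    rw [hw1]
    have : (0:ℝ) ≤ 1/(1-ξ) := by positivity
    nlinarith
  refine ⟨⟨h0', h1'⟩, ?_⟩
  rw [abs_of_nonneg h0, abs_of_nonneg h1, abs_of_nonneg h0', abs_of_nonneg h1', hw0, hw1]
  nlinarith [mul_le_mul_of_nonneg_right hξi h0, mul_le_mul_of_nonneg_right hηi h1,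
    mul_le_mul_of_nonneg_right hprod h1]
end
end

section
/- For all ξ, η with 0 < ξ, η < 1, the matrix M₄ maps the closed cone C⁻ = {(a,b) ∈ ℝ² : a ≥ 0 and b ≤ 0} into itself, and for every v ∈ C⁻ one has ‖M₄ v‖₁ ≥ 2‖v‖₁, where ‖(a,b)‖₁ = |a| + |b|. -/
open Matrix

noncomputable section

/-- For all `0 < ξ, η < 1`, `M₄` maps the closed cone
`C⁻ = {(a,b) : a ≥ 0, b ≤ 0}` into itself, and expands the `ℓ¹`-norm
`‖(a,b)‖₁ = |a| + |b|` by a factor at least 2 on this cone. -/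
theorem M4_cone_invariant_expanding (ξ η : ℝ) (hξ0 : 0 < ξ) (hξ1 : ξ < 1)
    (hη0 : 0 < η) (hη1 : η < 1) :
    ∀ v : Fin 2 → ℝ, 0 ≤ v 0 → v 1 ≤ 0 →
      (0 ≤ (M4 ξ η).mulVec v 0 ∧ (M4 ξ η).mulVec v 1 ≤ 0) ∧
      2 * (|v 0| + |v 1|) ≤ |(M4 ξ η).mulVec v 0| + |(M4 ξ η).mulVec v 1| := by
  intro v h0 h1
  have hξ : (1:ℝ) ≤ 1/ξ := (le_div_iff₀ hξ0).2 (by linarith)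
  have hη : (1:ℝ) ≤ 1/η := (le_div_iff₀ hη0).2 (by linarith)
  have hξη : (0:ℝ) < 1/(ξ*η) := by positivity
  have e0 : (M4 ξ η).mulVec v 0 = v 0 - (1/η) * v 1 := by
    simp [M4, mulVec, dotProduct, Fin.sum_univ_two, sub_eq_add_neg]
  have e1 : (M4 ξ η).mulVec v 1 = -(1/ξ) * v 0 + (1 + 1/(ξ*η)) * v 1 := by
    simp [M4, mulVec, dotProduct, Fin.sum_univ_two]
  have hA : 0 ≤ (M4 ξ η).mulVec v 0 := by
    rw [e0]; nlinarith
  have hB : (M4 ξ η).mulVec v 1 ≤ 0 := by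
    rw [e1]; nlinarith
  refine ⟨⟨hA, hB⟩, ?_⟩
  rw [abs_of_nonneg hA, abs_of_nonpos hB, abs_of_nonneg h0, abs_of_nonpos h1, e0, e1]
  nlinarith [mul_nonneg (sub_nonneg.2 hξ) h0, mul_nonpos_of_nonneg_of_nonpos (by linarith : (0:ℝ) ≤ 1/η + 1/(ξ*η) - 1) h1]
end
end

section
/- Let R : 𝕋² → 𝕋² be the negation map R(x,y) = (-x,-y). Then for all ξ, η with 0 < ξ, η < 1, one has F_{1-η} ∘ R ∘ F_η ∘ R = id and G_{1-ξ} ∘ R ∘ G_ξ ∘ R = id on 𝕋² (i.e. R ∘ F_η ∘ R = F_{1-η}⁻¹ and R ∘ G_ξ ∘ R = G_{1-ξ}⁻¹). -/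
open MeasureTheory Filter Topology

noncomputable section

/-- The negation map `R(x,y) = (-x,-y)` on `𝕋²`. -/
def Rmap : Torus → Torus := fun z => (-z.1, -z.2)

lemma rep_mem (z : AddCircle (1:ℝ)) : rep z ∈ Set.Ico (0:ℝ) 1 := by
  have := (AddCircle.equivIco 1 0 z).2
  simpa [rep] using this

lemma rep_coe (x : ℝ) (hx : x ∈ Set.Ico (0:ℝ) 1) : rep (↑x : AddCircle (1:ℝ)) = x := by
  have := AddCircle.coe_equivIco_mk_apply (𝕜 := ℝ) (p := 1) x
  simp only [rep] at *
  rw [this, div_one, mul_one, Int.fract_eq_self.2 hx]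

lemma coe_rep (z : AddCircle (1:ℝ)) : ((rep z : ℝ) : AddCircle (1:ℝ)) = z := by
  exact (AddCircle.equivIco 1 0).symm_apply_apply z

lemma rep_zero : rep (0 : AddCircle (1:ℝ)) = 0 := by
  rw [show (0 : AddCircle (1:ℝ)) = ((0:ℝ) : AddCircle (1:ℝ)) by norm_cast]
  exact rep_coe 0 ⟨le_rfl, one_pos⟩

lemma coe_one_eq_zero : ((1:ℝ) : AddCircle (1:ℝ)) = 0 := by
  exact AddCircle.coe_period 1

lemma rep_neg (z : AddCircle (1:ℝ)) :
    rep (-z) = if rep z = 0 then 0 else 1 - rep z := by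
  have hz := rep_mem z
  by_cases h : rep z = 0
  · have hz0 : z = 0 := by rw [← coe_rep z, h]; norm_cast
    rw [hz0, neg_zero, rep_zero]; simp
  · rw [if_neg h]
    have h1 : (-z) = ((1 - rep z : ℝ) : AddCircle (1:ℝ)) := by
      rw [show ((1 - rep z : ℝ) : AddCircle (1:ℝ))
            = ((1:ℝ) : AddCircle (1:ℝ)) - ((rep z : ℝ) : AddCircle (1:ℝ)) by norm_cast]
      rw [coe_one_eq_zero, coe_rep, zero_sub]
    rw [h1]
    have h0 : 0 < rep z := hz.1.lt_of_ne (Ne.symm h)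
    exact rep_coe _ ⟨by linarith [hz.2], by linarith⟩

lemma key (a : ℝ) (ha0 : 0 < a) (ha1 : a < 1) (z : AddCircle (1:ℝ)) :
    (if rep (-z) ≤ 1 - a then rep (-z) / (1 - a) else (1 - rep (-z)) / a)
      = (if rep z ≤ 1 - (1 - a) then rep z / (1 - (1 - a)) else (1 - rep z) / (1 - a)) := by
  have hz := rep_mem z
  have h1a : 1 - (1 - a) = a := by ring
  rw [rep_neg, h1a]
  by_cases h : rep z = 0
  · rw [if_pos h, h, if_pos (by linarith), if_pos ha0.le]
    simp
  · have h0 : 0 < rep z := hz.1.lt_of_ne (Ne.symm h)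
    rw [if_neg h]
    rcases lt_trichotomy (rep z) a with hr | hr | hr
    · rw [if_neg (by linarith), if_pos hr.le]
      ring_nf
    · rw [hr, if_pos (by linarith), if_pos le_rfl,
        div_self (by linarith), div_self (by linarith)]
    · rw [if_pos (by linarith), if_neg (by linarith)]

/-- For all `0 < ξ, η < 1`: `F_{1-η} ∘ R ∘ F_η ∘ R = id` and `G_{1-ξ} ∘ R ∘ G_ξ ∘ R = id`
on `𝕋²` (i.e. `R ∘ F_η ∘ R = F_{1-η}⁻¹` and `R ∘ G_ξ ∘ R = G_{1-ξ}⁻¹`). -/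
theorem negation_conjugacy (ξ η : ℝ) (hξ0 : 0 < ξ) (hξ1 : ξ < 1)
    (hη0 : 0 < η) (hη1 : η < 1) :
    Fmap (1-η) ∘ Rmap ∘ Fmap η ∘ Rmap = id ∧
    Gmap (1-ξ) ∘ Rmap ∘ Gmap ξ ∘ Rmap = id := by
  constructor
  · funext z
    simp only [Function.comp_apply, Fmap, Rmap, neg_neg, id_eq]
    erw [key η hη0 hη1 z.2]
    refine Prod.ext ?_ rfl
    rw [neg_add, neg_neg, add_assoc, neg_add_cancel, add_zero]
  · funext z
    simp only [Function.comp_apply, Gmap, Rmap, neg_neg, id_eq]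
    erw [key ξ hξ0 hξ1 z.1]
    refine Prod.ext rfl ?_
    rw [neg_add, neg_neg, add_assoc, neg_add_cancel, add_zero]
end
end

section
/- For all ξ, η with 0 < ξ, η < 1: H_{(ξ,η)} is mixing with respect to the Haar probability measure μ if and only if H_{(1-ξ,1-η)} is mixing with respect to μ. -/
open MeasureTheory Filter Topology

noncomputable section

/-- A map `f` of `𝕋²` is mixing (w.r.t. the Haar probability measure `μ`) if
`μ(fⁿ(B) ∩ A) → μ(A)·μ(B)` for all measurable `A, B ⊆ 𝕋²`. -/
def Mixing (f : Torus → Torus) : Prop :=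
  ∀ A B : Set Torus, MeasurableSet A → MeasurableSet B →
    Tendsto (fun n : ℕ => μ (f^[n] '' B ∩ A)) atTop (𝓝 (μ A * μ B))

/-! ### Auxiliary material -/

namespace MixingAux

lemma rep_measurable : Measurable rep :=
  measurable_subtype_coe.comp (AddCircle.measurableEquivIco (T := (1:ℝ)) 0).measurable

lemma rep_mem (z : AddCircle (1:ℝ)) : rep z ∈ Set.Ico (0:ℝ) 1 := by
  have := (AddCircle.equivIco 1 0 z).2
  simpa [rep] using this

lemma coe_rep (z : AddCircle (1:ℝ)) : ((rep z : ℝ) : AddCircle (1:ℝ)) = z :=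
  (AddCircle.equivIco 1 0).symm_apply_apply z

lemma rep_coe {x : ℝ} (hx : x ∈ Set.Ico (0:ℝ) 1) : rep (x : AddCircle (1:ℝ)) = x := by
  unfold rep
  rw [AddCircle.equivIco, QuotientAddGroup.equivIcoMod_coe]
  exact (toIcoMod_eq_self _).mpr (by simpa using hx)

lemma measurable_coe_circle : Measurable (fun x : ℝ => (x : AddCircle (1:ℝ))) :=
  (AddCircle.continuous_mk' (1:ℝ)).measurable

/-- The shear amount as a function of the parameter and a real representative. -/
def sfun (a u : ℝ) : ℝ := if u ≤ 1 - a then u / (1 - a) else (1 - u) / a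

lemma sfun_zero {a : ℝ} (ha1 : a < 1) : sfun a 0 = 0 := by
  unfold sfun
  rw [if_pos (by linarith : (0:ℝ) ≤ 1 - a), zero_div]

lemma sfun_symm {a : ℝ} (ha0 : 0 < a) (ha1 : a < 1) {u : ℝ} (hu0 : 0 < u) (hu1 : u < 1) :
    sfun (1 - a) (1 - u) = sfun a u := by
  simp only [sfun, sub_sub_cancel]
  split_ifs with h1 h2 h2
  · have hu : u = 1 - a := by linarith
    subst hu
    rw [sub_sub_cancel, div_self (by linarith), div_self (by linarith)]
  · rfl
  · rfl
  · exfalso; push_neg at h1 h2; linarith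

/-- The shear amount as a circle-valued function of a circle point. -/
def σc (a : ℝ) (w : AddCircle (1:ℝ)) : AddCircle (1:ℝ) := ((sfun a (rep w) : ℝ) : AddCircle (1:ℝ))

lemma σc_measurable (a : ℝ) : Measurable (σc a) := by
  have hs : Measurable (sfun a) := by
    unfold sfun
    exact Measurable.ite (measurableSet_le measurable_id measurable_const)
      (measurable_id.div_const _) ((measurable_const.sub measurable_id).div_const _)
  exact measurable_coe_circle.comp (hs.comp rep_measurable)

lemma rep_neg {w : AddCircle (1:ℝ)} (hw : rep w ≠ 0) : rep (-w) = 1 - rep w := by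
  have h0 : 0 < rep w := lt_of_le_of_ne (rep_mem w).1 (Ne.symm hw)
  have h1 : rep w < 1 := (rep_mem w).2
  have hcoe : ((1 - rep w : ℝ) : AddCircle (1:ℝ)) = -w := by
    have : ((1 - rep w : ℝ) : AddCircle (1:ℝ)) = ((1:ℝ) : AddCircle (1:ℝ)) + ((-rep w : ℝ) : AddCircle (1:ℝ)) := by
      rw [← QuotientAddGroup.mk_add]; ring_nf
    rw [this, AddCircle.coe_period, zero_add]
    rw [QuotientAddGroup.mk_neg, coe_rep]
  rw [← hcoe, rep_coe ⟨by linarith, by linarith⟩]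

lemma rep_eq_zero {w : AddCircle (1:ℝ)} (hw : rep w = 0) : w = 0 := by
  have := coe_rep w
  rw [hw] at this
  simpa using this.symm

lemma σc_key {a : ℝ} (ha0 : 0 < a) (ha1 : a < 1) (w : AddCircle (1:ℝ)) :
    σc (1 - a) w = σc a (-w) := by
  by_cases hw : rep w = 0
  · have hw0 : w = 0 := rep_eq_zero hw
    subst hw0
    simp only [σc, neg_zero, hw]
    rw [sfun_zero (by linarith), sfun_zero (by linarith)]
  · have h0 : 0 < rep w := lt_of_le_of_ne (rep_mem w).1 (Ne.symm hw)
    have h1 : rep w < 1 := (rep_mem w).2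
    simp only [σc, rep_neg hw]
    rw [show sfun (1 - a) (rep w) = sfun a (1 - rep w) from ?_]
    have := sfun_symm ha0 ha1 (u := 1 - rep w) (by linarith) (by linarith)
    rw [← this, sub_sub_cancel]

/-- `Fmap η` as a measurable equivalence. -/
def Fe (η : ℝ) : Torus ≃ᵐ Torus where
  toEquiv :=
    { toFun := fun z => (z.1 + σc η z.2, z.2)
      invFun := fun z => (z.1 - σc η z.2, z.2)
      left_inv := fun z => by simp
      right_inv := fun z => by simp }
  measurable_toFun :=
    (measurable_fst.add ((σc_measurable η).comp measurable_snd)).prodMk measurable_snd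
  measurable_invFun :=
    (measurable_fst.sub ((σc_measurable η).comp measurable_snd)).prodMk measurable_snd

/-- `Gmap ξ` as a measurable equivalence. -/
def Ge (ξ : ℝ) : Torus ≃ᵐ Torus where
  toEquiv :=
    { toFun := fun z => (z.1, z.2 + σc ξ z.1)
      invFun := fun z => (z.1, z.2 - σc ξ z.1)
      left_inv := fun z => by simp
      right_inv := fun z => by simp }
  measurable_toFun :=
    measurable_fst.prodMk (measurable_snd.add ((σc_measurable ξ).comp measurable_fst))
  measurable_invFun :=
    measurable_fst.prodMk (measurable_snd.sub ((σc_measurable ξ).comp measurable_fst))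

/-- Negation on the torus as a measurable equivalence. -/
def Rneg : Torus ≃ᵐ Torus where
  toEquiv :=
    { toFun := fun z => -z
      invFun := fun z => -z
      left_inv := fun z => by simp
      right_inv := fun z => by simp }
  measurable_toFun := measurable_neg
  measurable_invFun := measurable_neg

lemma Fmap_eq (η : ℝ) : Fmap η = ⇑(Fe η) := rfl

lemma Gmap_eq (ξ : ℝ) : Gmap ξ = ⇑(Ge ξ) := rfl

lemma Ge_MP (ξ : ℝ) : MeasurePreserving (⇑(Ge ξ)) μ μ := by
  have h : MeasurePreserving (fun q : Torus => (q.1, q.2 + σc ξ q.1))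
      ((volume : Measure (AddCircle (1:ℝ))).prod volume)
      ((volume : Measure (AddCircle (1:ℝ))).prod volume) :=
    MeasurePreserving.skew_product (g := fun a c => c + σc ξ a) (MeasurePreserving.id _)
      (by exact measurable_snd.add ((σc_measurable ξ).comp measurable_fst))
      (ae_of_all _ fun a => map_add_right_eq_self volume (σc ξ a))
  show MeasurePreserving _ μ μ
  unfold μ
  rw [Measure.volume_eq_prod]
  exact h

lemma Fe_MP (η : ℝ) : MeasurePreserving (⇑(Fe η)) μ μ := by
  have h : MeasurePreserving (fun q : Torus => (q.1, q.2 + σc η q.1))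
      ((volume : Measure (AddCircle (1:ℝ))).prod volume)
      ((volume : Measure (AddCircle (1:ℝ))).prod volume) :=
    MeasurePreserving.skew_product (g := fun a c => c + σc η a) (MeasurePreserving.id _)
      (by exact measurable_snd.add ((σc_measurable η).comp measurable_fst))
      (ae_of_all _ fun a => map_add_right_eq_self volume (σc η a))
  have hsw : MeasurePreserving (Prod.swap : Torus → Torus)
      ((volume : Measure (AddCircle (1:ℝ))).prod volume)
      ((volume : Measure (AddCircle (1:ℝ))).prod volume) :=
    Measure.measurePreserving_swap
  have hc := (hsw.comp h).comp hsw
  show MeasurePreserving _ μ μ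
  unfold μ
  rw [Measure.volume_eq_prod]
  exact hc

lemma Rneg_MP : MeasurePreserving (⇑Rneg) μ μ := by
  have h1 : MeasurePreserving (fun x : AddCircle (1:ℝ) => -x) volume volume :=
    Measure.measurePreserving_neg volume
  have h : MeasurePreserving
      (Prod.map (fun x : AddCircle (1:ℝ) => -x) (fun x : AddCircle (1:ℝ) => -x))
      ((volume : Measure (AddCircle (1:ℝ))).prod volume)
      ((volume : Measure (AddCircle (1:ℝ))).prod volume) := h1.prod h1
  show MeasurePreserving _ μ μ
  unfold μ
  rw [Measure.volume_eq_prod]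
  exact h

lemma meas_image (e : Torus ≃ᵐ Torus) (he : MeasurePreserving (⇑e) μ μ) (S : Set Torus) :
    μ (⇑e '' S) = μ S := by
  rw [MeasurableEquiv.image_eq_preimage_symm]
  exact (he.symm e).measure_preimage_equiv S

lemma mixing_conj (e : Torus ≃ᵐ Torus) (he : MeasurePreserving (⇑e) μ μ)
    {f : Torus → Torus} (hf : Mixing f) : Mixing (⇑e ∘ f ∘ ⇑e.symm) := by
  intro A B hA hB
  have hsc : Function.Semiconj (⇑e) f (⇑e ∘ f ∘ ⇑e.symm) := fun x => by simp
  have hB' : ⇑e '' (⇑e.symm '' B) = B := by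
    rw [Set.image_image]; simp
  have himg : ∀ n, (⇑e ∘ f ∘ ⇑e.symm)^[n] '' B = ⇑e '' (f^[n] '' (⇑e.symm '' B)) := by
    intro n
    have hcomp : (⇑e ∘ f ∘ ⇑e.symm)^[n] ∘ ⇑e = ⇑e ∘ f^[n] :=
      funext fun x => ((hsc.iterate_right n) x).symm
    conv_lhs => rw [← hB']
    rw [← Set.image_comp, hcomp, Set.image_comp]
  have hAs : ⇑e.symm '' A = ⇑e ⁻¹' A := by
    rw [MeasurableEquiv.image_eq_preimage_symm, MeasurableEquiv.symm_symm]
  have hBs : ⇑e.symm '' B = ⇑e ⁻¹' B := by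
    rw [MeasurableEquiv.image_eq_preimage_symm, MeasurableEquiv.symm_symm]
  have key : ∀ n, μ ((⇑e ∘ f ∘ ⇑e.symm)^[n] '' B ∩ A)
      = μ (f^[n] '' (⇑e.symm '' B) ∩ ⇑e.symm '' A) := by
    intro n
    rw [himg n]
    have : ⇑e '' (f^[n] '' (⇑e.symm '' B)) ∩ A
        = ⇑e '' (f^[n] '' (⇑e.symm '' B) ∩ ⇑e.symm '' A) := by
      rw [Set.image_inter e.injective]
      congr 1
      rw [Set.image_image]; simp
    rw [this, meas_image e he]
  have hlim := hf (⇑e.symm '' A) (⇑e.symm '' B)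
    (by rw [hAs]; exact e.measurable hA) (by rw [hBs]; exact e.measurable hB)
  have hμA : μ (⇑e.symm '' A) = μ A := meas_image e.symm (he.symm e) A
  have hμB : μ (⇑e.symm '' B) = μ B := meas_image e.symm (he.symm e) B
  rw [hμA, hμB] at hlim
  exact hlim.congr fun n => (key n).symm

lemma mixing_inv (e : Torus ≃ᵐ Torus) (he : MeasurePreserving (⇑e) μ μ)
    (hmix : Mixing (⇑e)) : Mixing (⇑e.symm) := by
  intro A B hA hB
  have him : ∀ (n : ℕ) (S : Set Torus), μ ((⇑e)^[n] '' S) = μ S := by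
    intro n
    induction n with
    | zero => intro S; simp
    | succ n ih =>
      intro S
      rw [Function.iterate_succ', Set.image_comp, meas_image e he]
      exact ih S
  have hli : Function.LeftInverse (⇑e) (⇑e.symm) := e.apply_symm_apply
  have hinv : ∀ n : ℕ, (⇑e)^[n] '' ((⇑e.symm)^[n] '' B ∩ A) = B ∩ (⇑e)^[n] '' A := by
    intro n
    rw [Set.image_inter (e.injective.iterate n)]
    congr 1
    rw [← Set.image_comp]
    have : (⇑e)^[n] ∘ (⇑e.symm)^[n] = id := funext (hli.iterate n)
    rw [this, Set.image_id]
  have key : ∀ n : ℕ, μ ((⇑e.symm)^[n] '' B ∩ A) = μ ((⇑e)^[n] '' A ∩ B) := by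
    intro n
    rw [← him n ((⇑e.symm)^[n] '' B ∩ A), hinv n, Set.inter_comm]
  have hlim := hmix B A hB hA
  rw [mul_comm] at hlim
  exact hlim.congr fun n => (key n).symm

lemma mixing_congr {f g : Torus → Torus} (h : f = g) (hf : Mixing f) : Mixing g := h ▸ hf

lemma forward (ξ η : ℝ) (hξ0 : 0 < ξ) (hξ1 : ξ < 1) (hη0 : 0 < η) (hη1 : η < 1)
    (h : Mixing (Hmap ξ η)) : Mixing (Hmap (1-ξ) (1-η)) := by
  set K : Torus ≃ᵐ Torus := (Fe η).trans (Ge ξ) with hK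
  have hKmp : MeasurePreserving (⇑K) μ μ := (Ge_MP ξ).comp (Fe_MP η)
  have h0 : Mixing (⇑K) := by
    have : Hmap ξ η = ⇑K := rfl
    rwa [this] at h
  -- conjugate by Fe η to get `Fe ∘ Ge`
  set L : Torus ≃ᵐ Torus := (Ge ξ).trans (Fe η) with hL
  have hLmp : MeasurePreserving (⇑L) μ μ := (Fe_MP η).comp (Ge_MP ξ)
  have h1 : Mixing (⇑L) := by
    have hc := mixing_conj (Fe η) (Fe_MP η) h0
    refine mixing_congr ?_ hc
    funext z
    show (Fe η) (K ((Fe η).symm z)) = L z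
    simp [hK, hL, MeasurableEquiv.trans_apply]
  have h2 : Mixing (⇑L.symm) := mixing_inv L hLmp h1
  have h3 : Mixing (⇑Rneg ∘ ⇑L.symm ∘ ⇑Rneg.symm) := mixing_conj Rneg Rneg_MP h2
  refine mixing_congr ?_ h3
  funext z
  show -(L.symm (-z)) = Hmap (1-ξ) (1-η) z
  have hLs : L.symm (-z) = (Ge ξ).symm ((Fe η).symm (-z)) := rfl
  have hF : (Fe η).symm (-z) = (-z.1 - σc η (-z.2), -z.2) := rfl
  have hG : (Ge ξ).symm (-z.1 - σc η (-z.2), -z.2)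
      = (-z.1 - σc η (-z.2), -z.2 - σc ξ (-z.1 - σc η (-z.2))) := rfl
  have hH : Hmap (1-ξ) (1-η) z
      = (z.1 + σc (1-η) z.2, z.2 + σc (1-ξ) (z.1 + σc (1-η) z.2)) := rfl
  rw [hLs, hF, hG, hH]
  have e1 : σc (1-η) z.2 = σc η (-z.2) := σc_key hη0 hη1 z.2
  have e2 : σc (1-ξ) (z.1 + σc (1-η) z.2) = σc ξ (-(z.1 + σc (1-η) z.2)) :=
    σc_key hξ0 hξ1 _
  rw [e2, e1]
  refine Prod.ext ?_ ?_
  · show -(-z.1 - σc η (-z.2)) = z.1 + σc η (-z.2)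
    abel
  · show -(-z.2 - σc ξ (-z.1 - σc η (-z.2))) = z.2 + σc ξ (-(z.1 + σc η (-z.2)))
    have : -z.1 - σc η (-z.2) = -(z.1 + σc η (-z.2)) := by abel
    rw [this]
    abel

end MixingAux

/-- For all `0 < ξ, η < 1`: `H_{(ξ,η)}` is mixing w.r.t. `μ` iff `H_{(1-ξ,1-η)}` is. -/
theorem mixing_reflection (ξ η : ℝ) (hξ0 : 0 < ξ) (hξ1 : ξ < 1)
    (hη0 : 0 < η) (hη1 : η < 1) :
    Mixing (Hmap ξ η) ↔ Mixing (Hmap (1-ξ) (1-η)) := by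
  constructor
  · exact MixingAux.forward ξ η hξ0 hξ1 hη0 hη1
  · intro h
    have := MixingAux.forward (1-ξ) (1-η) (by linarith) (by linarith) (by linarith) (by linarith) h
    simpa [sub_sub_cancel] using this
end
end
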